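/- Let (Ω,𝓕,ℙ) be a probability space, fix x₀ ∈ ℝ^N, and let {x_k}_{k≥1} be random vectors in ℝ^N. Let φ : ℝ^N → ℝ be nonnegative and measurable, set ξ_k = φ(x_k) (so ξ₀ = φ(x₀) is a constant), assume each ξ_k is integrable and that ξ_{k+1} ≤ ξ_k almost surely for every k ≥ 0. Let α, β ≥ 0 and c₁ > 0 satisfy σ := √(α² + 4β/c₁) < 1, and suppose that for every k ≥ 0 the conditional expectation satisfies E[ξ_{k+1} | σ(x_k)] ≤ (1+α)ξ_k − ξ_k²/c₁ + β almost surely. Let ρ ∈ (0,1) and let ε satisfy (c₁/2)(α + √(α² + 4β/(c₁ρ))) < ε < min{(1+α)c₁, ξ₀}, and set u = (c₁/2)(α + σ). If K is a natural number with K ≥ c₁/(ε − αc₁) · log((ε − βc₁/(ε − αc₁))/(ερ − βc₁/(ε − αc₁))) + m + 2, where m = min{(1/σ)·log((ξ₀ − u)/(ε − u)), c₁/(ε − u) − c₁/(ξ₀ − u)} when σ > 0 and m = c₁/(ε − u) − c₁/(ξ₀ − u) when σ = 0, then ℙ(ξ_K ≤ ε) ≥ 1 − ρ. -/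

import Mathlib

open MeasureTheory

lemma aux_lin (q bs : ℝ) (hq : 0 ≤ q) (b : ℕ → ℝ)
    (hrec : ∀ k, b (k + 1) ≤ q * b k + (1 - q) * bs) (n₀ : ℕ) :
    ∀ j, b (n₀ + j) - bs ≤ q ^ j * (b n₀ - bs) := by
  intro j
  induction j with
  | zero => simp
  | succ j ih =>
    have h := hrec (n₀ + j)
    have h2 := mul_le_mul_of_nonneg_left ih hq
    have he : n₀ + (j + 1) = (n₀ + j) + 1 := by ring
    rw [he, pow_succ]
    nlinarith [h, h2, mul_comm q (q ^ j)]

lemma aux_pow_exp (q : ℝ) (h0 : 0 ≤ q) (n : ℕ) :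
    q ^ n ≤ Real.exp (-(1 - q) * n) := by
  have h1 : q ≤ Real.exp (-(1 - q)) := by
    have := Real.add_one_le_exp (-(1 - q)); linarith
  calc q ^ n ≤ (Real.exp (-(1 - q))) ^ n := pow_le_pow_left₀ h0 h1 n
    _ = Real.exp (-(1 - q) * n) := by rw [← Real.exp_nat_mul]; ring_nf

lemma aux_phase1 (c₁ σ u ε ξ₀ : ℝ) (hc₁ : 0 < c₁) (hσ0 : 0 ≤ σ) (hσ1 : σ ≤ 1)
    (a : ℕ → ℝ) (ha0 : a 0 = ξ₀) (hmono : ∀ k, a (k + 1) ≤ a k)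
    (hrec : ∀ k, a (k + 1) - u ≤ (a k - u) * (1 - σ - (a k - u) / c₁))
    (huε : u < ε) (n : ℕ)
    (hn : (0 < σ ∧ 1 / σ * Real.log ((ξ₀ - u) / (ε - u)) ≤ n)
        ∨ c₁ / (ε - u) - c₁ / (ξ₀ - u) ≤ n) :
    a n ≤ ε := by
  subst ha0
  have hdesc : ∀ k, a k ≤ a 0 := by
    intro k
    induction k with
    | zero => exact le_refl _
    | succ k ih => exact (hmono k).trans ih
  by_cases h0 : a 0 ≤ ε
  · exact (hdesc n).trans h0
  push_neg at h0
  have hεu : 0 < ε - u := by linarith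
  have hd0 : 0 < a 0 - u := by linarith
  rcases hn with ⟨hσp, hlog⟩ | hsub
  · -- geometric branch
    have inv : ∀ k, a k ≤ ε ∨ a k - u ≤ (1 - σ) ^ k * (a 0 - u) := by
      intro k
      induction k with
      | zero => right; simp
      | succ k ih =>
        rcases ih with h | h
        · left; exact (hmono k).trans h
        · by_cases hk : a k ≤ ε
          · left; exact (hmono k).trans hk
          · right
            push_neg at hk
            have hdk : 0 ≤ a k - u := by linarith
            have h1σ : 0 ≤ 1 - σ := by linarith
            calc a (k + 1) - u ≤ (a k - u) * (1 - σ - (a k - u) / c₁) := hrec k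
              _ ≤ (a k - u) * (1 - σ) := by
                  apply mul_le_mul_of_nonneg_left _ hdk
                  have : 0 ≤ (a k - u) / c₁ := div_nonneg hdk hc₁.le
                  linarith
              _ ≤ ((1 - σ) ^ k * (a 0 - u)) * (1 - σ) := mul_le_mul_of_nonneg_right h h1σ
              _ = (1 - σ) ^ (k + 1) * (a 0 - u) := by ring
    rcases inv n with h | h
    · exact h
    · have hexp1 : (1 - σ) ^ n ≤ Real.exp (-(σ * n)) := by
        have h1 : 1 - σ ≤ Real.exp (-σ) := by
          have := Real.add_one_le_exp (-σ); linarith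
        calc (1 - σ) ^ n ≤ (Real.exp (-σ)) ^ n := by
              apply pow_le_pow_left₀ (by linarith) h1
          _ = Real.exp (-(σ * n)) := by rw [← Real.exp_nat_mul]; ring_nf
      have hL : Real.log ((a 0 - u) / (ε - u)) ≤ σ * n := by
        have := mul_le_mul_of_nonneg_left hlog hσp.le
        rw [← mul_assoc, mul_one_div, div_self hσp.ne'] at this
        linarith [this]
      have hR : (a 0 - u) / (ε - u) ≤ Real.exp (σ * n) := by
        rw [← Real.exp_log (div_pos hd0 hεu)]
        exact Real.exp_le_exp.mpr hL
      have hR2 : a 0 - u ≤ Real.exp (σ * n) * (ε - u) := by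
        rw [div_le_iff₀ hεu] at hR; linarith
      have hE : Real.exp (-(σ * n)) * (a 0 - u) ≤ ε - u := by
        have hp := Real.exp_pos (σ * n)
        have := mul_le_mul_of_nonneg_left hR2 (Real.exp_pos (-(σ * n))).le
        rw [← mul_assoc, ← Real.exp_add] at this
        simp at this
        linarith
      have := mul_le_mul_of_nonneg_right hexp1 hd0.le
      linarith
  · -- sublinear branch
    have inv : ∀ k, a k ≤ ε ∨ (u < a k ∧ c₁ / (a 0 - u) + k ≤ c₁ / (a k - u)) := by
      intro k
      induction k with
      | zero => right; exact ⟨by linarith, by simp⟩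
      | succ k ih =>
        rcases ih with h | ⟨h1, h2⟩
        · left; exact (hmono k).trans h
        · by_cases hk : a (k + 1) ≤ ε
          · left; exact hk
          · right
            push_neg at hk
            have hd' : 0 < a (k + 1) - u := by linarith
            have hd : 0 < a k - u := by linarith [hmono k]
            refine ⟨by linarith, ?_⟩
            have hstep : a (k + 1) - u ≤ (a k - u) - (a k - u) ^ 2 / c₁ := by
              have := hrec k
              have hσd : 0 ≤ σ * (a k - u) := mul_nonneg hσ0 hd.le
              have hexpand : (a k - u) * (1 - σ - (a k - u) / c₁)
                  = (a k - u) - σ * (a k - u) - (a k - u) ^ 2 / c₁ := by ring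
              linarith [hexpand ▸ this]
            have hkey : c₁ / (a k - u) + 1 ≤ c₁ / (a (k + 1) - u) := by
              have hdd' : a (k + 1) - u ≤ a k - u := by linarith [hmono k]
              have h3 : (c₁ + (a k - u)) / (a k - u) ≤ c₁ / (a (k + 1) - u) := by
                rw [div_le_div_iff₀ hd hd']
                nlinarith [mul_le_mul_of_nonneg_left hstep hc₁.le,
                  div_mul_cancel₀ ((a k - u) ^ 2) hc₁.ne',
                  mul_le_mul_of_nonneg_left hdd' hd.le]
              have h4 : c₁ / (a k - u) + 1 = (c₁ + (a k - u)) / (a k - u) := by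
                field_simp
              linarith [h4 ▸ h3]
            push_cast
            linarith
    rcases inv n with h | ⟨h1, h2⟩
    · exact h
    · have hn' : c₁ / (ε - u) ≤ c₁ / (a n - u) := by linarith
      have hdn : 0 < a n - u := by linarith
      rw [div_le_div_iff₀ hεu hdn] at hn'
      nlinarith [hn']

lemma aux_const (α β c₁ ρ ε σ u : ℝ) (hα : 0 ≤ α) (hβ : 0 ≤ β) (hc₁ : 0 < c₁)
    (hρ0 : 0 < ρ) (hρ1 : ρ < 1)
    (hσdef : σ = Real.sqrt (α ^ 2 + 4 * β / c₁))
    (hudef : u = c₁ / 2 * (α + σ))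
    (hεlow : c₁ / 2 * (α + Real.sqrt (α ^ 2 + 4 * β / (c₁ * ρ))) < ε) :
    0 < ε ∧ α * c₁ < ε ∧ β * c₁ < ρ * (ε * (ε - α * c₁)) ∧ u < ε ∧ 0 ≤ u ∧
      c₁ * (α + σ) = 2 * u ∧ u ^ 2 = α * c₁ * u + β * c₁ := by
  have hσ0 : 0 ≤ σ := hσdef ▸ Real.sqrt_nonneg _
  have hs0 : 0 ≤ Real.sqrt (α ^ 2 + 4 * β / (c₁ * ρ)) := Real.sqrt_nonneg _
  have hε0 : 0 < ε := lt_of_le_of_lt (by positivity) hεlow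
  have hs2 : Real.sqrt (α ^ 2 + 4 * β / (c₁ * ρ)) ^ 2 * (c₁ * ρ)
      = α ^ 2 * (c₁ * ρ) + 4 * β := by
    rw [Real.sq_sqrt (by positivity)]
    field_simp
  set s := Real.sqrt (α ^ 2 + 4 * β / (c₁ * ρ)) with hsdef
  have h3 : c₁ * (α + s) < 2 * ε := by nlinarith [hεlow]
  have h4 : (c₁ * s) ^ 2 < (2 * ε - c₁ * α) ^ 2 := by
    nlinarith [mul_nonneg hc₁.le hs0, mul_nonneg hc₁.le hα]
  have hs2c : c₁ * (s ^ 2 * (c₁ * ρ)) = c₁ * (α ^ 2 * (c₁ * ρ) + 4 * β) := by rw [hs2]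
  have key : β * c₁ < ρ * (ε * (ε - α * c₁)) := by
    nlinarith [mul_lt_mul_of_pos_left h4 hρ0, hs2c]
  have hεα : α * c₁ < ε := by nlinarith [key, mul_nonneg hβ hc₁.le, mul_pos hρ0 hε0]
  have hσs : σ ≤ s := by
    rw [hσdef, hsdef]
    apply Real.sqrt_le_sqrt
    have h5 : 4 * β / c₁ ≤ 4 * β / (c₁ * ρ) := by
      apply div_le_div_of_nonneg_left (by positivity) (by positivity)
      nlinarith [mul_le_mul_of_nonneg_left hρ1.le hc₁.le]
    linarith
  have huε : u < ε := by
    have h6 : c₁ / 2 * (α + σ) ≤ c₁ / 2 * (α + s) :=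
      mul_le_mul_of_nonneg_left (by linarith) (by positivity)
    rw [hudef]; linarith [hεlow]
  have hu0 : 0 ≤ u := by rw [hudef]; positivity
  have hσc : c₁ * (α + σ) = 2 * u := by rw [hudef]; ring
  have hufix : u ^ 2 = α * c₁ * u + β * c₁ := by
    have hσsq : σ ^ 2 * c₁ = α ^ 2 * c₁ + 4 * β := by
      rw [hσdef, Real.sq_sqrt (by positivity)]
      field_simp
    rw [hudef]
    linear_combination (c₁ / 4) * hσsq
  exact ⟨hε0, hεα, key, huε, hu0, hσc, hufix⟩

set_option maxHeartbeats 1000000 in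
/-- Theorem 1(i) of the paper: high-probability iteration complexity for a nonnegative,
nonincreasing stochastic process satisfying the one-step inequality
`E[ξ_{k+1} | σ(x_k)] ≤ (1+α)ξ_k − ξ_k²/c₁ + β`. -/
theorem iteration_complexity_sublinear
    {N : ℕ} {Ω : Type*} [MeasurableSpace Ω] (μ : Measure Ω) [IsProbabilityMeasure μ]
    (x0 : Fin N → ℝ) (X : ℕ → Ω → Fin N → ℝ)
    (hXmeas : ∀ k, Measurable (X k)) (hX0 : ∀ ω, X 0 ω = x0)
    (φ : (Fin N → ℝ) → ℝ) (hφmeas : Measurable φ) (hφnonneg : ∀ v, 0 ≤ φ v)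
    (hint : ∀ k, Integrable (fun ω => φ (X k ω)) μ)
    (hmono : ∀ k, ∀ᵐ ω ∂μ, φ (X (k + 1) ω) ≤ φ (X k ω))
    (α β : ℝ) (hα : 0 ≤ α) (hβ : 0 ≤ β) (c₁ : ℝ) (hc₁ : 0 < c₁)
    (σ : ℝ) (hσdef : σ = Real.sqrt (α ^ 2 + 4 * β / c₁)) (hσlt : σ < 1)
    (hcond : ∀ k, ∀ᵐ ω ∂μ,
      (μ[fun ω' => φ (X (k + 1) ω') |
          MeasurableSpace.comap (X k) MeasurableSpace.pi]) ω ≤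
        (1 + α) * φ (X k ω) - (φ (X k ω)) ^ 2 / c₁ + β)
    (ρ : ℝ) (hρ : ρ ∈ Set.Ioo (0 : ℝ) 1) (ε : ℝ)
    (hεlow : c₁ / 2 * (α + Real.sqrt (α ^ 2 + 4 * β / (c₁ * ρ))) < ε)
    (hεup : ε < min ((1 + α) * c₁) (φ x0))
    (u : ℝ) (hudef : u = c₁ / 2 * (α + σ))
    (m : ℝ)
    (hmdef : m = if σ = 0 then c₁ / (ε - u) - c₁ / (φ x0 - u)
      else min (1 / σ * Real.log ((φ x0 - u) / (ε - u)))
               (c₁ / (ε - u) - c₁ / (φ x0 - u)))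
    (K : ℕ)
    (hK : c₁ / (ε - α * c₁) *
        Real.log ((ε - β * c₁ / (ε - α * c₁)) / (ε * ρ - β * c₁ / (ε - α * c₁)))
        + m + 2 ≤ K) :
    ENNReal.ofReal (1 - ρ) ≤ μ {ω | φ (X K ω) ≤ ε} := by
  obtain ⟨hρ0, hρ1⟩ := hρ
  obtain ⟨hεc, hξ0⟩ := lt_min_iff.mp hεup
  have hσ0 : 0 ≤ σ := hσdef ▸ Real.sqrt_nonneg _
  obtain ⟨hε0, hεα, key, huε, hu0, hσc, hufix⟩ :=
    aux_const α β c₁ ρ ε σ u hα hβ hc₁ hρ0 hρ1 hσdef hudef hεlow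
  have hξmeas : ∀ j, Measurable fun ω => φ (X j ω) := fun j => hφmeas.comp (hXmeas j)
  -- the two one-step inequalities
  have hmain : ∀ k,
      ((∫ ω, φ (X (k + 1) ω) ∂μ)
        ≤ (1 + α) * (∫ ω, φ (X k ω) ∂μ) - (∫ ω, φ (X k ω) ∂μ) ^ 2 / c₁ + β)
      ∧ (∫ ω in {ω | ε < φ (X (k + 1) ω)}, φ (X (k + 1) ω) ∂μ)
          ≤ (1 + α - ε / c₁) * (∫ ω in {ω | ε < φ (X k ω)}, φ (X k ω) ∂μ) + β := by
    intro k
    have hm : MeasurableSpace.comap (X k) MeasurableSpace.pi ≤ _ :=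
      (hXmeas k).comap_le
    set g := μ[fun ω' => φ (X (k + 1) ω') |
        MeasurableSpace.comap (X k) MeasurableSpace.pi] with hgdef
    have hgint : Integrable g μ := integrable_condExp
    have hgnn : 0 ≤ᵐ[μ] g :=
      condExp_nonneg (Filter.Eventually.of_forall fun ω => hφnonneg _)
    have hle := hcond k
    have i1 : Integrable (fun ω => (1 + α) * φ (X k ω)) μ := (hint k).const_mul _
    have i1b : Integrable (fun ω => (1 + α) * φ (X k ω) + β) μ := i1.add (integrable_const β)
    have hbint : Integrable (fun ω => c₁ * ((1 + α) * φ (X k ω) + β - g ω)) μ :=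
      (i1b.sub hgint).const_mul c₁
    have hsqint : Integrable (fun ω => (φ (X k ω)) ^ 2) μ := by
      refine Integrable.mono' hbint ((hξmeas k).pow_const 2).aestronglyMeasurable ?_
      filter_upwards [hle] with ω h
      rw [Real.norm_of_nonneg (sq_nonneg _)]
      have h2 : (φ (X k ω)) ^ 2 / c₁ ≤ (1 + α) * φ (X k ω) + β - g ω := by linarith
      calc (φ (X k ω)) ^ 2 = c₁ * ((φ (X k ω)) ^ 2 / c₁) := by field_simp
        _ ≤ c₁ * ((1 + α) * φ (X k ω) + β - g ω) :=
            mul_le_mul_of_nonneg_left h2 hc₁.le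
    have i2 : Integrable (fun ω => (φ (X k ω)) ^ 2 / c₁) μ := hsqint.div_const _
    have i3 : Integrable (fun ω => (1 + α) * φ (X k ω) - (φ (X k ω)) ^ 2 / c₁) μ := i1.sub i2
    have hInt2 : Integrable
        (fun ω => (1 + α) * φ (X k ω) - (φ (X k ω)) ^ 2 / c₁ + β) μ :=
      i3.add (integrable_const β)
    constructor
    · have h1 : ∫ ω, φ (X (k + 1) ω) ∂μ = ∫ ω, g ω ∂μ := (integral_condExp hm).symm
      have h2 : ∫ ω, g ω ∂μ ≤
          ∫ ω, ((1 + α) * φ (X k ω) - (φ (X k ω)) ^ 2 / c₁ + β) ∂μ :=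
        integral_mono_ae hgint hInt2 hle
      have h3 : ∫ ω, ((1 + α) * φ (X k ω) - (φ (X k ω)) ^ 2 / c₁ + β) ∂μ
          = (1 + α) * (∫ ω, φ (X k ω) ∂μ) - (∫ ω, (φ (X k ω)) ^ 2 ∂μ) / c₁ + β := by
        rw [integral_add i3 (integrable_const β), integral_sub i1 i2,
          integral_const_mul, integral_div, integral_const, probReal_univ]
        simp
      have h4 : (∫ ω, φ (X k ω) ∂μ) ^ 2 ≤ ∫ ω, (φ (X k ω)) ^ 2 ∂μ := by
        set A := ∫ ω, φ (X k ω) ∂μ with hA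
        have h5 : 0 ≤ ∫ ω, (φ (X k ω) - A) ^ 2 ∂μ :=
          integral_nonneg fun ω => sq_nonneg _
        have h6 : ∫ ω, (φ (X k ω) - A) ^ 2 ∂μ
            = ∫ ω, ((φ (X k ω)) ^ 2 - (2 * A) * φ (X k ω) + A ^ 2) ∂μ := by
          congr 1; funext ω; ring
        have i4 : Integrable (fun ω => (2 * A) * φ (X k ω)) μ := (hint k).const_mul _
        have i5 : Integrable (fun ω => (φ (X k ω)) ^ 2 - (2 * A) * φ (X k ω)) μ :=
          hsqint.sub i4
        rw [h6, integral_add i5 (integrable_const _), integral_sub hsqint i4,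
          integral_const_mul, integral_const, probReal_univ] at h5
        simp only [ENNReal.toReal_one, smul_eq_mul, one_mul, ← hA] at h5
        nlinarith [h5]
      have h7 : (∫ ω, φ (X k ω) ∂μ) ^ 2 / c₁ ≤ (∫ ω, (φ (X k ω)) ^ 2 ∂μ) / c₁ := by
        gcongr
      rw [h1]
      rw [h3] at h2
      linarith
    · have hAm : MeasurableSet[MeasurableSpace.comap (X k) MeasurableSpace.pi]
          {ω | ε < φ (X k ω)} := ⟨φ ⁻¹' Set.Ioi ε, hφmeas measurableSet_Ioi, rfl⟩
      have hAmeas : MeasurableSet {ω | ε < φ (X k ω)} :=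
        measurableSet_lt measurable_const (hξmeas k)
      have hsub : {ω | ε < φ (X (k + 1) ω)} ≤ᵐ[μ] {ω | ε < φ (X k ω)} := by
        filter_upwards [hmono k] with ω h
        exact fun h2 => lt_of_lt_of_le h2 h
      have iq : Integrable (fun ω => (1 + α - ε / c₁) * φ (X k ω) + β) μ :=
        ((hint k).const_mul _).add (integrable_const β)
      calc ∫ ω in {ω | ε < φ (X (k + 1) ω)}, φ (X (k + 1) ω) ∂μ
          ≤ ∫ ω in {ω | ε < φ (X k ω)}, φ (X (k + 1) ω) ∂μ := by
            apply setIntegral_mono_set (hint (k + 1)).integrableOn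
              (ae_restrict_of_ae (Filter.Eventually.of_forall fun ω => hφnonneg _)) hsub
        _ = ∫ ω in {ω | ε < φ (X k ω)}, g ω ∂μ :=
            (setIntegral_condExp hm (hint (k + 1)) hAm).symm
        _ ≤ ∫ ω in {ω | ε < φ (X k ω)}, ((1 + α - ε / c₁) * φ (X k ω) + β) ∂μ := by
            apply setIntegral_mono_ae_restrict hgint.integrableOn iq.integrableOn
            filter_upwards [ae_restrict_of_ae hle, ae_restrict_mem hAmeas] with ω h1 h2
            have hωε : ε < φ (X k ω) := h2
            have h9 : ε * φ (X k ω) ≤ (φ (X k ω)) ^ 2 := by nlinarith [hε0]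
            have hdiv : ε * φ (X k ω) / c₁ ≤ (φ (X k ω)) ^ 2 / c₁ := by gcongr
            have h10 : (1 + α - ε / c₁) * φ (X k ω) + β
                = (1 + α) * φ (X k ω) - ε * φ (X k ω) / c₁ + β := by ring
            linarith [h1]
        _ = (1 + α - ε / c₁) * (∫ ω in {ω | ε < φ (X k ω)}, φ (X k ω) ∂μ)
              + β * (μ {ω | ε < φ (X k ω)}).toReal := by
            rw [integral_add ((hint k).const_mul _).integrableOn
              (integrableOn_const (measure_ne_top μ _)),
              integral_const_mul, setIntegral_const, smul_eq_mul, measureReal_def]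
            ring
        _ ≤ (1 + α - ε / c₁) * (∫ ω in {ω | ε < φ (X k ω)}, φ (X k ω) ∂μ) + β := by
            have ht : (μ {ω | ε < φ (X k ω)}).toReal ≤ 1 := by
              have h9 := prob_le_one (μ := μ) (s := {ω | ε < φ (X k ω)})
              calc (μ {ω | ε < φ (X k ω)}).toReal ≤ (1 : ENNReal).toReal :=
                    ENNReal.toReal_mono (by simp) h9
                _ = 1 := by simp
            nlinarith [mul_le_mul_of_nonneg_left ht hβ]
  -- remaining elementary consequences of the constants
  have hεαc : 0 < ε - α * c₁ := by linarith
  have hq0 : 0 ≤ 1 + α - ε / c₁ := by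
    have : ε / c₁ < 1 + α := (div_lt_iff₀ hc₁).mpr (by linarith)
    linarith
  have hqgap : 0 < 1 - (1 + α - ε / c₁) := by
    have : α < ε / c₁ := (lt_div_iff₀ hc₁).mpr (by linarith)
    linarith
  have hbs0 : 0 ≤ β * c₁ / (ε - α * c₁) := by positivity
  have hbsρ : β * c₁ / (ε - α * c₁) < ε * ρ := by
    rw [div_lt_iff₀ hεαc]
    calc β * c₁ < ρ * (ε * (ε - α * c₁)) := key
      _ = ε * ρ * (ε - α * c₁) := by ring
  have hβq : (1 - (1 + α - ε / c₁)) * (β * c₁ / (ε - α * c₁)) = β := by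
    field_simp
    ring
  have hερ : ε * ρ ≤ ε := mul_le_of_le_one_right hε0.le hρ1.le
  have hεbs : 0 < ε - β * c₁ / (ε - α * c₁) := by linarith
  have hρbs : 0 < ε * ρ - β * c₁ / (ε - α * c₁) := by linarith
  have hamono : ∀ k, (∫ ω, φ (X (k + 1) ω) ∂μ) ≤ ∫ ω, φ (X k ω) ∂μ :=
    fun k => integral_mono_ae (hint (k + 1)) (hint k) (hmono k)
  have ha0 : (∫ ω, φ (X 0 ω) ∂μ) = φ x0 := by
    have hfun : (fun ω => φ (X 0 ω)) = fun _ => φ x0 := funext fun ω => by rw [hX0]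
    rw [hfun, integral_const]; simp
  have harec : ∀ k, (∫ ω, φ (X (k + 1) ω) ∂μ) - u
      ≤ ((∫ ω, φ (X k ω) ∂μ) - u) * (1 - σ - ((∫ ω, φ (X k ω) ∂μ) - u) / c₁) := by
    intro k
    have h8 := (hmain k).1
    have hid : (1 + α) * (∫ ω, φ (X k ω) ∂μ) - (∫ ω, φ (X k ω) ∂μ) ^ 2 / c₁ + β - u
        = ((∫ ω, φ (X k ω) ∂μ) - u) * (1 - σ - ((∫ ω, φ (X k ω) ∂μ) - u) / c₁) := by
      field_simp
      linear_combination ((∫ ω, φ (X k ω) ∂μ) - u) * hσc - hufix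
    linarith
  have hrecb : ∀ k, (∫ ω in {ω | ε < φ (X (k + 1) ω)}, φ (X (k + 1) ω) ∂μ)
      ≤ (1 + α - ε / c₁) * (∫ ω in {ω | ε < φ (X k ω)}, φ (X k ω) ∂μ)
        + (1 - (1 + α - ε / c₁)) * (β * c₁ / (ε - α * c₁)) := by
    intro k
    rw [hβq]
    exact (hmain k).2
  -- positivity of m and choice of n₀
  have hεu : 0 < ε - u := by linarith
  have hx0u : 0 < φ x0 - u := by linarith
  have hM2 : 0 < c₁ / (ε - u) - c₁ / (φ x0 - u) := by
    have := div_lt_div_of_pos_left hc₁ hεu (by linarith : ε - u < φ x0 - u)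
    linarith
  have hm0 : 0 < m := by
    rw [hmdef]; split_ifs with hσz
    · exact hM2
    · have hσp : 0 < σ := lt_of_le_of_ne hσ0 (Ne.symm hσz)
      apply lt_min _ hM2
      apply mul_pos (by positivity)
      apply Real.log_pos
      rw [lt_div_iff₀ hεu]
      linarith
  set n₀ : ℕ := ⌈m⌉₊ + 1 with hn₀def
  have hn₀m : m ≤ (n₀ : ℝ) := by
    rw [hn₀def]
    push_cast
    linarith [Nat.le_ceil m]
  have hn₀m2 : (n₀ : ℝ) ≤ m + 2 := by
    rw [hn₀def]
    push_cast
    linarith [Nat.ceil_lt_add_one hm0.le]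
  have hL0 : 0 ≤ Real.log ((ε - β * c₁ / (ε - α * c₁)) / (ε * ρ - β * c₁ / (ε - α * c₁))) := by
    apply Real.log_nonneg
    rw [le_div_iff₀ hρbs]
    linarith
  have hT0 : 0 ≤ c₁ / (ε - α * c₁) *
      Real.log ((ε - β * c₁ / (ε - α * c₁)) / (ε * ρ - β * c₁ / (ε - α * c₁))) :=
    mul_nonneg (by positivity) hL0
  have hn₀K : n₀ ≤ K := by
    have h11 : (n₀ : ℝ) ≤ (K : ℝ) := by linarith [hK]
    exact_mod_cast h11
  -- Phase 1 : the mean drops below ε after n₀ steps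
  have hP1 : (∫ ω, φ (X n₀ ω) ∂μ) ≤ ε := by
    apply aux_phase1 c₁ σ u ε (φ x0) hc₁ hσ0 hσlt.le
      (fun k => ∫ ω, φ (X k ω) ∂μ) ha0 hamono harec huε n₀
    by_cases hσz : σ = 0
    · right
      have hmeq : m = c₁ / (ε - u) - c₁ / (φ x0 - u) := by rw [hmdef, if_pos hσz]
      linarith
    · have hσp : 0 < σ := lt_of_le_of_ne hσ0 (Ne.symm hσz)
      have hmeq : m = min (1 / σ * Real.log ((φ x0 - u) / (ε - u)))
          (c₁ / (ε - u) - c₁ / (φ x0 - u)) := by rw [hmdef, if_neg hσz]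
      rcases le_total (1 / σ * Real.log ((φ x0 - u) / (ε - u)))
          (c₁ / (ε - u) - c₁ / (φ x0 - u)) with hle2 | hle2
      · left
        refine ⟨hσp, ?_⟩
        have h12 : m = 1 / σ * Real.log ((φ x0 - u) / (ε - u)) := by
          rw [hmeq, min_eq_left hle2]
        linarith
      · right
        have h12 : m = c₁ / (ε - u) - c₁ / (φ x0 - u) := by
          rw [hmeq, min_eq_right hle2]
        linarith
  have hbn₀ : (∫ ω in {ω | ε < φ (X n₀ ω)}, φ (X n₀ ω) ∂μ) ≤ ε :=
    le_trans (setIntegral_le_integral (hint n₀)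
      (Filter.Eventually.of_forall fun ω => hφnonneg _)) hP1
  -- Phase 2 : geometric contraction of the truncated mean
  have hlin : (∫ ω in {ω | ε < φ (X K ω)}, φ (X K ω) ∂μ) - β * c₁ / (ε - α * c₁)
      ≤ (1 + α - ε / c₁) ^ (K - n₀) *
        ((∫ ω in {ω | ε < φ (X n₀ ω)}, φ (X n₀ ω) ∂μ) - β * c₁ / (ε - α * c₁)) := by
    have h13 := aux_lin (1 + α - ε / c₁) (β * c₁ / (ε - α * c₁)) hq0
      (fun k => ∫ ω in {ω | ε < φ (X k ω)}, φ (X k ω) ∂μ) hrecb n₀ (K - n₀)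
    rw [Nat.add_sub_cancel' hn₀K] at h13
    exact h13
  have hjcast : ((K - n₀ : ℕ) : ℝ) = (K : ℝ) - (n₀ : ℝ) := Nat.cast_sub hn₀K
  have hjT : c₁ / (ε - α * c₁) *
      Real.log ((ε - β * c₁ / (ε - α * c₁)) / (ε * ρ - β * c₁ / (ε - α * c₁)))
      ≤ ((K - n₀ : ℕ) : ℝ) := by
    rw [hjcast]; linarith
  have h1q : 1 - (1 + α - ε / c₁) = (ε - α * c₁) / c₁ := by
    field_simp
    ring
  have hLle : Real.log ((ε - β * c₁ / (ε - α * c₁)) / (ε * ρ - β * c₁ / (ε - α * c₁)))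
      ≤ (1 - (1 + α - ε / c₁)) * ((K - n₀ : ℕ) : ℝ) := by
    have h14 := mul_le_mul_of_nonneg_left hjT hqgap.le
    have h15 : ∀ L : ℝ, (1 - (1 + α - ε / c₁)) * (c₁ / (ε - α * c₁) * L) = L := by
      intro L
      rw [h1q]
      field_simp
    rw [h15] at h14
    linarith [h14]
  have hqj : (1 + α - ε / c₁) ^ (K - n₀) * (ε - β * c₁ / (ε - α * c₁))
      ≤ ε * ρ - β * c₁ / (ε - α * c₁) := by
    have hexpL : (ε - β * c₁ / (ε - α * c₁)) / (ε * ρ - β * c₁ / (ε - α * c₁))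
        ≤ Real.exp ((1 - (1 + α - ε / c₁)) * ((K - n₀ : ℕ) : ℝ)) := by
      rw [← Real.exp_log (div_pos hεbs hρbs)]
      exact Real.exp_le_exp.mpr hLle
    have h16 : ε - β * c₁ / (ε - α * c₁)
        ≤ Real.exp ((1 - (1 + α - ε / c₁)) * ((K - n₀ : ℕ) : ℝ))
          * (ε * ρ - β * c₁ / (ε - α * c₁)) := by
      rw [div_le_iff₀ hρbs] at hexpL; linarith
    have hE := aux_pow_exp (1 + α - ε / c₁) hq0 (K - n₀)
    have h17 : Real.exp (-(1 - (1 + α - ε / c₁)) * ((K - n₀ : ℕ) : ℝ))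
        * (ε - β * c₁ / (ε - α * c₁)) ≤ ε * ρ - β * c₁ / (ε - α * c₁) := by
      have h18 := mul_le_mul_of_nonneg_left h16
        (Real.exp_pos (-(1 - (1 + α - ε / c₁)) * ((K - n₀ : ℕ) : ℝ))).le
      rw [← mul_assoc, ← Real.exp_add] at h18
      have h19 : -(1 - (1 + α - ε / c₁)) * ((K - n₀ : ℕ) : ℝ)
          + (1 - (1 + α - ε / c₁)) * ((K - n₀ : ℕ) : ℝ) = 0 := by ring
      rw [h19, Real.exp_zero, one_mul] at h18
      linarith
    have h20 := mul_le_mul_of_nonneg_right hE hεbs.le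
    linarith
  have hbK : (∫ ω in {ω | ε < φ (X K ω)}, φ (X K ω) ∂μ) ≤ ε * ρ := by
    have h21 : (1 + α - ε / c₁) ^ (K - n₀) *
        ((∫ ω in {ω | ε < φ (X n₀ ω)}, φ (X n₀ ω) ∂μ) - β * c₁ / (ε - α * c₁))
        ≤ (1 + α - ε / c₁) ^ (K - n₀) * (ε - β * c₁ / (ε - α * c₁)) :=
      mul_le_mul_of_nonneg_left (by linarith) (pow_nonneg hq0 _)
    linarith
  -- Markov's inequality and conclusion
  have hAK : MeasurableSet {ω | ε < φ (X K ω)} :=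
    measurableSet_lt measurable_const (hξmeas K)
  have hMar : (μ {ω | ε < φ (X K ω)}).toReal * ε
      ≤ ∫ ω in {ω | ε < φ (X K ω)}, φ (X K ω) ∂μ := by
    have h22 := setIntegral_mono_on
      (integrableOn_const (measure_ne_top μ _))
      (hint K).integrableOn hAK (fun ω hω => le_of_lt hω)
    rwa [setIntegral_const, smul_eq_mul] at h22
  have hρK : (μ {ω | ε < φ (X K ω)}).toReal ≤ ρ := by
    have h23 : (μ {ω | ε < φ (X K ω)}).toReal * ε ≤ ρ * ε := by
      calc (μ {ω | ε < φ (X K ω)}).toReal * ε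
          ≤ ∫ ω in {ω | ε < φ (X K ω)}, φ (X K ω) ∂μ := hMar
        _ ≤ ε * ρ := hbK
        _ = ρ * ε := by ring
    exact le_of_mul_le_mul_right h23 hε0
  have hμle : μ {ω | ε < φ (X K ω)} ≤ ENNReal.ofReal ρ := by
    rw [← ENNReal.ofReal_toReal (measure_ne_top μ _)]
    exact ENNReal.ofReal_le_ofReal hρK
  have hset : {ω | φ (X K ω) ≤ ε} = {ω | ε < φ (X K ω)}ᶜ := by
    ext ω; simp [not_lt]
  rw [hset, prob_compl_eq_one_sub hAK]
  calc ENNReal.ofReal (1 - ρ) = 1 - ENNReal.ofReal ρ := by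
        rw [ENNReal.ofReal_sub _ hρ0.le, ENNReal.ofReal_one]
    _ ≤ 1 - μ {ω | ε < φ (X K ω)} := tsub_le_tsub_left hμle 1
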